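/- For n ≥ 5, eqdim(S''_n) ≥ 2n. -/

import Mathlib

/-- `S` is a distance-equalizer set of `G`. -/
def IsDistEqSet {V : Type*} (G : SimpleGraph V) (S : Set V) : Prop :=
  ∀ u v : V, u ∉ S → v ∉ S → u ≠ v → ∃ x ∈ S, G.dist u x = G.dist v x

/-- The equidistant dimension of `G`. -/
noncomputable def eqdim {V : Type*} (G : SimpleGraph V) : ℕ :=
  sInf {k | ∃ S : Finset V, IsDistEqSet G ↑S ∧ S.card = k}

/-- The convex polytope graph `S''_n` on vertex layers a=0, b=1, c=2, d=3. -/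
def S2Graph (n : ℕ) : SimpleGraph (Fin 4 × ZMod n) :=
  SimpleGraph.fromRel (fun x y =>
    (x.1 = y.1 ∧ y.2 = x.2 + 1) ∨
    (x.1 = 0 ∧ y.1 = 1 ∧ y.2 = x.2) ∨
    (x.1 = 1 ∧ y.1 = 2 ∧ y.2 = x.2) ∨
    (x.1 = 2 ∧ y.1 = 3 ∧ y.2 = x.2) ∨
    (x.1 = 1 ∧ y.1 = 2 ∧ x.2 = y.2 + 1))

open SimpleGraph

/-- Generic projection lemma: a "weak retraction" `f` with potential `ι` shortens walks. -/
lemma walk_project {V : Type*} {G : SimpleGraph V} (f : V → V) (ι : V → ℕ)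
    (hf : ∀ u v, G.Adj u v →
      (f u = f v ∧ ι u ≤ ι v + 1) ∨ (G.Adj (f u) (f v) ∧ ι u = ι v)) :
    ∀ {u x : V} (W : G.Walk u x), f x = x → ι x = 0 →
      ∃ Z : G.Walk (f u) x, Z.length + ι u ≤ W.length := by
  intro u x W
  induction W with
  | nil =>
    intro hx hix
    exact ⟨SimpleGraph.Walk.nil.copy hx.symm rfl, by simp [hix]⟩
  | cons h W ih =>
    intro hx hix
    obtain ⟨Z', hZ'⟩ := ih hx hix
    rcases hf _ _ h with ⟨he, hi⟩ | ⟨ha, hi⟩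
    · exact ⟨Z'.copy he.symm rfl, by simp only [SimpleGraph.Walk.length_copy,
        SimpleGraph.Walk.length_cons]; omega⟩
    · exact ⟨SimpleGraph.Walk.cons ha Z', by simp only [SimpleGraph.Walk.length_cons]; omega⟩

lemma dist_project {V : Type*} {G : SimpleGraph V} (f : V → V) (ι : V → ℕ)
    (hf : ∀ u v, G.Adj u v →
      (f u = f v ∧ ι u ≤ ι v + 1) ∨ (G.Adj (f u) (f v) ∧ ι u = ι v))
    {u x : V} (hr : G.Reachable u x) (hx : f x = x) (hix : ι x = 0) :
    G.dist (f u) x + ι u ≤ G.dist u x := by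
  obtain ⟨W, hW⟩ := hr.exists_walk_length_eq_dist
  obtain ⟨Z, hZ⟩ := walk_project f ι hf W hx hix
  have := SimpleGraph.dist_le Z
  omega

namespace S2aux

abbrev VV (n : ℕ) := Fin 4 × ZMod n

variable {n : ℕ}

lemma s2_adj {u v : VV n} : (S2Graph n).Adj u v ↔ u ≠ v ∧
    (((u.1 = v.1 ∧ v.2 = u.2 + 1) ∨
    (u.1 = 0 ∧ v.1 = 1 ∧ v.2 = u.2) ∨
    (u.1 = 1 ∧ v.1 = 2 ∧ v.2 = u.2) ∨
    (u.1 = 2 ∧ v.1 = 3 ∧ v.2 = u.2) ∨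
    (u.1 = 1 ∧ v.1 = 2 ∧ u.2 = v.2 + 1)) ∨
    ((v.1 = u.1 ∧ u.2 = v.2 + 1) ∨
    (v.1 = 0 ∧ u.1 = 1 ∧ u.2 = v.2) ∨
    (v.1 = 1 ∧ u.1 = 2 ∧ u.2 = v.2) ∨
    (v.1 = 2 ∧ u.1 = 3 ∧ u.2 = v.2) ∨
    (v.1 = 1 ∧ u.1 = 2 ∧ v.2 = u.2 + 1))) :=
  SimpleGraph.fromRel_adj _ _ _

variable (hn : 5 ≤ n)
include hn

lemma one_ne_zero_z : (1 : ZMod n) ≠ 0 := by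
  haveI : Fact (1 < n) := ⟨by omega⟩
  exact one_ne_zero

lemma succ_ne {i : ZMod n} : i + 1 ≠ i := by
  intro h
  rw [add_comm, add_eq_right] at h
  exact one_ne_zero_z hn h

lemma adj_layer (L : Fin 4) {i j : ZMod n} (h : j = i + 1) :
    (S2Graph n).Adj (L, i) (L, j) := by
  rw [s2_adj]
  refine ⟨?_, Or.inl (Or.inl ⟨rfl, h⟩)⟩
  intro he
  exact succ_ne hn (h ▸ (congrArg Prod.snd he).symm)

lemma adj_vert01 (i : ZMod n) : (S2Graph n).Adj (0, i) (1, i) := by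
  rw [s2_adj]
  exact ⟨by simp, Or.inl (Or.inr (Or.inl ⟨rfl, rfl, rfl⟩))⟩

lemma adj_vert12 (i : ZMod n) : (S2Graph n).Adj (1, i) (2, i) := by
  rw [s2_adj]
  exact ⟨by simp, Or.inl (Or.inr (Or.inr (Or.inl ⟨rfl, rfl, rfl⟩)))⟩

lemma adj_vert23 (i : ZMod n) : (S2Graph n).Adj (2, i) (3, i) := by
  rw [s2_adj]
  exact ⟨by simp, Or.inl (Or.inr (Or.inr (Or.inr (Or.inl ⟨rfl, rfl, rfl⟩))))⟩

lemma reach_layer (L : Fin 4) (i : ZMod n) (k : ℕ) :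
    (S2Graph n).Reachable (L, i) (L, i + (k : ZMod n)) := by
  induction k with
  | zero => simpa using SimpleGraph.Reachable.refl _
  | succ k ih =>
    refine ih.trans (SimpleGraph.Adj.reachable ?_)
    have : ((k + 1 : ℕ) : ZMod n) = (k : ZMod n) + 1 := by push_cast; ring
    rw [this, ← add_assoc]
    exact adj_layer hn L rfl

lemma reach_vert (L : Fin 4) (i : ZMod n) : (S2Graph n).Reachable (0, i) (L, i) := by
  fin_cases L
  · exact SimpleGraph.Reachable.refl _
  · exact (adj_vert01 hn i).reachable
  · exact ((adj_vert01 hn i).reachable).trans (adj_vert12 hn i).reachable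
  · exact (((adj_vert01 hn i).reachable).trans (adj_vert12 hn i).reachable).trans
      (adj_vert23 hn i).reachable

lemma s2_reachable (u v : VV n) : (S2Graph n).Reachable u v := by
  haveI : NeZero n := ⟨by omega⟩
  obtain ⟨L, i⟩ := u
  obtain ⟨L', j⟩ := v
  have h1 : (S2Graph n).Reachable (L, i) (0, i) := (reach_vert hn L i).symm
  have h2 : (S2Graph n).Reachable (0, i) (0, j) := by
    have h3 := reach_layer hn 0 i ((j - i).val)
    have h4 : (((j - i).val : ℕ) : ZMod n) = j - i := ZMod.natCast_rightInverse _
    rw [h4, show i + (j - i) = j by ring] at h3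
    exact h3
  exact (h1.trans h2).trans (reach_vert hn L' j)

/-- fold layer 0 onto layer 1 -/
def f1 : VV n → VV n := fun w => if w.1 = 0 then ((1 : Fin 4), w.2) else w
def i1 : VV n → ℕ := fun w => if w.1 = 0 then 1 else 0
/-- project everything to layer 0 -/
def f2 : VV n → VV n := fun w => ((0 : Fin 4), w.2)
def i2 : VV n → ℕ := fun w => if w.1 = 0 then 0 else 1
/-- fold layer 3 onto layer 2 -/
def f3 : VV n → VV n := fun w => if w.1 = 3 then ((2 : Fin 4), w.2) else w
def i3 : VV n → ℕ := fun w => if w.1 = 3 then 1 else 0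
/-- project everything to layer 3 -/
def f4 : VV n → VV n := fun w => ((3 : Fin 4), w.2)
def i4 : VV n → ℕ := fun w => if w.1 = 3 then 0 else 1

lemma hf1 : ∀ u v : VV n, (S2Graph n).Adj u v →
    (f1 u = f1 v ∧ i1 u ≤ i1 v + 1) ∨ ((S2Graph n).Adj (f1 u) (f1 v) ∧ i1 u = i1 v) := by
  intro u v huv
  have hadj := huv
  rw [s2_adj] at huv
  obtain ⟨hne, h⟩ := huv
  obtain ⟨L, i⟩ := u
  obtain ⟨L', j⟩ := v
  simp only at h
  rcases h with (⟨h1, h2⟩ | ⟨h1, h2, h3⟩ | ⟨h1, h2, h3⟩ | ⟨h1, h2, h3⟩ | ⟨h1, h2, h3⟩) |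
    (⟨h1, h2⟩ | ⟨h1, h2, h3⟩ | ⟨h1, h2, h3⟩ | ⟨h1, h2, h3⟩ | ⟨h1, h2, h3⟩)
  -- case 1a: same layer, j = i + 1
  · subst h1
    by_cases hL : L = 0
    · subst hL
      right
      exact ⟨by simpa [f1] using adj_layer hn 1 h2, by simp [i1]⟩
    · right
      exact ⟨by simpa [f1, hL] using hadj, by simp [i1, hL]⟩
  -- case 2a: (0,i)-(1,i)
  · subst h1; subst h2; subst h3
    left
    exact ⟨by simp [f1], by simp [i1]⟩
  -- case 3a: (1,i)-(2,i)
  · subst h1; subst h2; subst h3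
    right
    exact ⟨by simpa [f1] using hadj, by simp [i1]⟩
  -- case 4a: (2,i)-(3,i)
  · subst h1; subst h2; subst h3
    right
    exact ⟨by simpa [f1] using hadj, by simp [i1]⟩
  -- case 5a: diagonal (1,i)-(2,j), i = j+1
  · subst h1; subst h2
    right
    exact ⟨by simpa [f1] using hadj, by simp [i1]⟩
  -- case 1b: same layer, i = j + 1
  · subst h1
    by_cases hL : L' = 0
    · subst hL
      right
      exact ⟨by simpa [f1] using (adj_layer hn 1 h2).symm, by simp [i1]⟩
    · right
      exact ⟨by simpa [f1, hL] using hadj, by simp [i1, hL]⟩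
  -- case 2b: v=(0,j), u=(1,j)
  · subst h1; subst h2; subst h3
    left
    exact ⟨by simp [f1], by simp [i1]⟩
  -- case 3b
  · subst h1; subst h2; subst h3
    right
    exact ⟨by simpa [f1] using hadj, by simp [i1]⟩
  -- case 4b
  · subst h1; subst h2; subst h3
    right
    exact ⟨by simpa [f1] using hadj, by simp [i1]⟩
  -- case 5b: u=(2,i), v=(1,j), j = i+1
  · subst h1; subst h2
    right
    exact ⟨by simpa [f1] using hadj, by simp [i1]⟩

lemma hf2 : ∀ u v : VV n, (S2Graph n).Adj u v →
    (f2 u = f2 v ∧ i2 u ≤ i2 v + 1) ∨ ((S2Graph n).Adj (f2 u) (f2 v) ∧ i2 u = i2 v) := by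
  intro u v huv
  rw [s2_adj] at huv
  obtain ⟨hne, h⟩ := huv
  obtain ⟨L, i⟩ := u
  obtain ⟨L', j⟩ := v
  simp only at h
  rcases h with (⟨h1, h2⟩ | ⟨h1, h2, h3⟩ | ⟨h1, h2, h3⟩ | ⟨h1, h2, h3⟩ | ⟨h1, h2, h3⟩) |
    (⟨h1, h2⟩ | ⟨h1, h2, h3⟩ | ⟨h1, h2, h3⟩ | ⟨h1, h2, h3⟩ | ⟨h1, h2, h3⟩)
  · subst h1
    right
    exact ⟨adj_layer hn 0 h2, by simp [i2]⟩
  · subst h1; subst h2; subst h3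
    left
    exact ⟨rfl, by simp [i2]⟩
  · subst h1; subst h2; subst h3
    left
    exact ⟨rfl, by simp [i2]⟩
  · subst h1; subst h2; subst h3
    left
    exact ⟨rfl, by simp [i2]⟩
  · subst h1; subst h2
    right
    exact ⟨(adj_layer hn 0 h3).symm, by simp [i2]⟩
  · subst h1
    right
    exact ⟨(adj_layer hn 0 h2).symm, by simp [i2]⟩
  · subst h1; subst h2; subst h3
    left
    exact ⟨rfl, by simp [i2]⟩
  · subst h1; subst h2; subst h3
    left
    exact ⟨rfl, by simp [i2]⟩
  · subst h1; subst h2; subst h3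
    left
    exact ⟨rfl, by simp [i2]⟩
  · subst h1; subst h2
    right
    exact ⟨adj_layer hn 0 h3, by simp [i2]⟩

lemma hf3 : ∀ u v : VV n, (S2Graph n).Adj u v →
    (f3 u = f3 v ∧ i3 u ≤ i3 v + 1) ∨ ((S2Graph n).Adj (f3 u) (f3 v) ∧ i3 u = i3 v) := by
  intro u v huv
  have hadj := huv
  rw [s2_adj] at huv
  obtain ⟨hne, h⟩ := huv
  obtain ⟨L, i⟩ := u
  obtain ⟨L', j⟩ := v
  simp only at h
  rcases h with (⟨h1, h2⟩ | ⟨h1, h2, h3⟩ | ⟨h1, h2, h3⟩ | ⟨h1, h2, h3⟩ | ⟨h1, h2, h3⟩) |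
    (⟨h1, h2⟩ | ⟨h1, h2, h3⟩ | ⟨h1, h2, h3⟩ | ⟨h1, h2, h3⟩ | ⟨h1, h2, h3⟩)
  · subst h1
    by_cases hL : L = 3
    · subst hL
      right
      exact ⟨by simpa [f3] using adj_layer hn 2 h2, by simp [i3]⟩
    · right
      exact ⟨by simpa [f3, hL] using hadj, by simp [i3, hL]⟩
  · subst h1; subst h2; subst h3
    right
    exact ⟨by simpa [f3] using hadj, by simp [i3]⟩
  · subst h1; subst h2; subst h3
    right
    exact ⟨by simpa [f3] using hadj, by simp [i3]⟩
  · subst h1; subst h2; subst h3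
    left
    exact ⟨by simp [f3], by simp [i3]⟩
  · subst h1; subst h2
    right
    exact ⟨by simpa [f3] using hadj, by simp [i3]⟩
  · subst h1
    by_cases hL : L' = 3
    · subst hL
      right
      exact ⟨by simpa [f3] using (adj_layer hn 2 h2).symm, by simp [i3]⟩
    · right
      exact ⟨by simpa [f3, hL] using hadj, by simp [i3, hL]⟩
  · subst h1; subst h2; subst h3
    right
    exact ⟨by simpa [f3] using hadj, by simp [i3]⟩
  · subst h1; subst h2; subst h3
    right
    exact ⟨by simpa [f3] using hadj, by simp [i3]⟩
  · subst h1; subst h2; subst h3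
    left
    exact ⟨by simp [f3], by simp [i3]⟩
  · subst h1; subst h2
    right
    exact ⟨by simpa [f3] using hadj, by simp [i3]⟩

lemma hf4 : ∀ u v : VV n, (S2Graph n).Adj u v →
    (f4 u = f4 v ∧ i4 u ≤ i4 v + 1) ∨ ((S2Graph n).Adj (f4 u) (f4 v) ∧ i4 u = i4 v) := by
  intro u v huv
  rw [s2_adj] at huv
  obtain ⟨hne, h⟩ := huv
  obtain ⟨L, i⟩ := u
  obtain ⟨L', j⟩ := v
  simp only at h
  rcases h with (⟨h1, h2⟩ | ⟨h1, h2, h3⟩ | ⟨h1, h2, h3⟩ | ⟨h1, h2, h3⟩ | ⟨h1, h2, h3⟩) |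
    (⟨h1, h2⟩ | ⟨h1, h2, h3⟩ | ⟨h1, h2, h3⟩ | ⟨h1, h2, h3⟩ | ⟨h1, h2, h3⟩)
  · subst h1
    right
    exact ⟨adj_layer hn 3 h2, by simp [i4]⟩
  · subst h1; subst h2; subst h3
    left
    exact ⟨rfl, by simp [i4]⟩
  · subst h1; subst h2; subst h3
    left
    exact ⟨rfl, by simp [i4]⟩
  · subst h1; subst h2; subst h3
    left
    exact ⟨rfl, by simp [i4]⟩
  · subst h1; subst h2
    right
    exact ⟨(adj_layer hn 3 h3).symm, by simp [i4]⟩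
  · subst h1
    right
    exact ⟨(adj_layer hn 3 h2).symm, by simp [i4]⟩
  · subst h1; subst h2; subst h3
    left
    exact ⟨rfl, by simp [i4]⟩
  · subst h1; subst h2; subst h3
    left
    exact ⟨rfl, by simp [i4]⟩
  · subst h1; subst h2; subst h3
    left
    exact ⟨rfl, by simp [i4]⟩
  · subst h1; subst h2
    right
    exact ⟨adj_layer hn 3 h3, by simp [i4]⟩

lemma dist_ne_ab (i : ZMod n) (x : VV n) :
    (S2Graph n).dist (0, i) x ≠ (S2Graph n).dist (1, i) x := by
  by_cases hx : x.1 = 0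
  · have h := dist_project f2 i2 (hf2 hn) (u := ((1 : Fin 4), i)) (x := x)
      (s2_reachable hn _ _) (by simp [f2]; exact hx.symm ▸ rfl) (by simp [i2, hx])
    have h' : (S2Graph n).dist (0, i) x + 1 ≤ (S2Graph n).dist (1, i) x := by
      simpa [f2, i2] using h
    omega
  · have h := dist_project f1 i1 (hf1 hn) (u := ((0 : Fin 4), i)) (x := x)
      (s2_reachable hn _ _) (by simp [f1, hx]) (by simp [i1, hx])
    have h' : (S2Graph n).dist (1, i) x + 1 ≤ (S2Graph n).dist (0, i) x := by
      simpa [f1, i1] using h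
    omega

lemma dist_ne_cd (i : ZMod n) (x : VV n) :
    (S2Graph n).dist (2, i) x ≠ (S2Graph n).dist (3, i) x := by
  by_cases hx : x.1 = 3
  · have h := dist_project f4 i4 (hf4 hn) (u := ((2 : Fin 4), i)) (x := x)
      (s2_reachable hn _ _) (by simp [f4]; exact hx.symm ▸ rfl) (by simp [i4, hx])
    have h' : (S2Graph n).dist (3, i) x + 1 ≤ (S2Graph n).dist (2, i) x := by
      simpa [f4, i4] using h
    omega
  · have h := dist_project f3 i3 (hf3 hn) (u := ((3 : Fin 4), i)) (x := x)
      (s2_reachable hn _ _) (by simp [f3, hx]) (by simp [i3, hx])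
    have h' : (S2Graph n).dist (2, i) x + 1 ≤ (S2Graph n).dist (3, i) x := by
      simpa [f3, i3] using h
    omega

end S2aux

open Fin.NatCast

theorem stmt16 (n : ℕ) (hn : 5 ≤ n) : 2 * n ≤ eqdim (S2Graph n) := by
  haveI : NeZero n := ⟨by omega⟩
  have hne : {k | ∃ S : Finset (S2aux.VV n), IsDistEqSet (S2Graph n) ↑S ∧ S.card = k}.Nonempty := by
    refine ⟨(Finset.univ : Finset (S2aux.VV n)).card, Finset.univ, ?_, rfl⟩
    intro u v hu _ _
    exact absurd (Finset.mem_coe.mpr (Finset.mem_univ u)) hu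
  rw [eqdim]
  apply le_csInf hne
  rintro k ⟨S, hS, rfl⟩
  classical
  -- each of the 2n pairs contains a member of S
  have key : ∀ t : Fin 2, ∀ i : ZMod n,
      (((2 * ((t : ℕ) : Fin 4) : Fin 4), i) ∈ S ∨ ((2 * ((t : ℕ) : Fin 4) + 1 : Fin 4), i) ∈ S) := by
    intro t i
    by_contra hc
    push_neg at hc
    obtain ⟨h1, h2⟩ := hc
    have hne' : ((2 * ((t : ℕ) : Fin 4) : Fin 4), i) ≠ ((2 * ((t : ℕ) : Fin 4) + 1 : Fin 4), i) := by
      intro h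
      have := congrArg Prod.fst h
      fin_cases t <;> simp_all
    obtain ⟨x, hxS, hx⟩ := hS _ _ h1 h2 hne'
    fin_cases t
    · exact S2aux.dist_ne_ab hn i x (by simpa using hx)
    · exact S2aux.dist_ne_cd hn i x (by simpa using hx)
  -- the selection map
  set g : Fin 2 × ZMod n → S2aux.VV n := fun p =>
    if ((2 * ((p.1 : ℕ) : Fin 4) : Fin 4), p.2) ∈ S then ((2 * ((p.1 : ℕ) : Fin 4) : Fin 4), p.2)
    else ((2 * ((p.1 : ℕ) : Fin 4) + 1 : Fin 4), p.2) with hg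
  have hgS : ∀ p, g p ∈ S := by
    intro p
    rw [hg]
    dsimp only
    split_ifs with h
    · exact h
    · exact (key p.1 p.2).resolve_left h
  have hginj : Function.Injective g := by
    intro p q hpq
    obtain ⟨t, i⟩ := p
    obtain ⟨s, j⟩ := q
    have h2 : i = j := by
      have := congrArg Prod.snd hpq
      rw [hg] at this
      dsimp only at this
      split_ifs at this <;> exact this
    have h1 : t = s := by
      have := congrArg Prod.fst hpq
      rw [hg] at this
      dsimp only at this
      fin_cases t <;> fin_cases s <;> split_ifs at this <;> simp_all
    rw [h1, h2]
  have hcard : Fintype.card (Fin 2 × ZMod n) ≤ S.card := by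
    have := Finset.card_le_card_of_injOn (s := (Finset.univ : Finset (Fin 2 × ZMod n)))
      (t := S) g (fun p _ => hgS p) (fun p _ q _ h => hginj h)
    simpa using this
  rw [Fintype.card_prod, Fintype.card_fin, ZMod.card] at hcard
  exact hcard
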